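/- For λ < 0 and μ = √(−λ/18), the functions x̌(t) = 4e^{μt}, y̌²(t) = μ⁻¹e^{μt}, τ̌₂(t) = −3e^{μt} solve the shrinker limit system x̌' = −x̌τ̌₂/y̌² − x̌²/(2y̌²), (y̌²)' = x̌ + τ̌₂, τ̌₂' = −(4λy̌²(x̌ + (3/2)τ̌₂))/(3x̌). -/

import Mathlib

/-- `x̌(t) = 4 e^{μt}` with `μ = √(−λ/18)`. -/
noncomputable def xcF (lam : ℝ) : ℝ → ℝ :=
  fun t => 4 * Real.exp (Real.sqrt (-lam / 18) * t)

/-- `y̌²(t) = μ⁻¹ e^{μt}` with `μ = √(−λ/18)`. -/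
noncomputable def yc2F (lam : ℝ) : ℝ → ℝ :=
  fun t => (Real.sqrt (-lam / 18))⁻¹ * Real.exp (Real.sqrt (-lam / 18) * t)

/-- `τ̌₂(t) = −3 e^{μt}` with `μ = √(−λ/18)`. -/
noncomputable def tcF (lam : ℝ) : ℝ → ℝ :=
  fun t => -3 * Real.exp (Real.sqrt (-lam / 18) * t)

theorem stmt14 (lam : ℝ) (hlam : lam < 0) :
    ∀ t : ℝ,
      HasDerivAt (xcF lam)
        (-(xcF lam t * tcF lam t) / yc2F lam t
          - xcF lam t ^ 2 / (2 * yc2F lam t)) t ∧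
      HasDerivAt (yc2F lam) (xcF lam t + tcF lam t) t ∧
      HasDerivAt (tcF lam)
        (-(4 * lam * yc2F lam t * (xcF lam t + 3 / 2 * tcF lam t)) /
          (3 * xcF lam t)) t := by
  intro t
  set μ := Real.sqrt (-lam / 18) with hμdef
  have hμ : 0 < μ := Real.sqrt_pos.mpr (by linarith)
  have hμ2 : μ ^ 2 = -lam / 18 := Real.sq_sqrt (by linarith)
  have hE : 0 < Real.exp (μ * t) := Real.exp_pos _
  have hbase : HasDerivAt (fun s : ℝ => Real.exp (μ * s)) (Real.exp (μ * t) * μ) t := by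
    simpa [Function.comp_def] using (Real.hasDerivAt_exp (μ * t)).comp t ((hasDerivAt_id t).const_mul μ)
  refine ⟨?_, ?_, ?_⟩
  · have h : HasDerivAt (fun y => 4 * Real.exp (μ * y)) (4 * (Real.exp (μ * t) * μ)) t :=
      hbase.const_mul (4 : ℝ)
    convert h using 1
    rfl
    simp only [xcF, tcF, yc2F, ← hμdef]
    field_simp
    ring
  · have h : HasDerivAt (fun y => μ⁻¹ * Real.exp (μ * y)) (μ⁻¹ * (Real.exp (μ * t) * μ)) t :=
      hbase.const_mul (μ⁻¹ : ℝ)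
    convert h using 1
    rfl
    simp only [xcF, tcF, ← hμdef]
    field_simp
    ring
  · have h : HasDerivAt (fun y => (-3) * Real.exp (μ * y)) ((-3) * (Real.exp (μ * t) * μ)) t :=
      hbase.const_mul ((-3) : ℝ)
    convert h using 1
    rfl
    simp only [xcF, tcF, yc2F, ← hμdef]
    have hlamμ : lam = -18 * μ ^ 2 := by linarith [hμ2]
    rw [hlamμ]
    field_simp
    ring
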